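/- In the construction of the previous statement, the symmetric bilinear form B on g̃_x = g ⊕ C defined by B((r(a₁)+t₁x, c₁), (r(a₂)+t₂x, c₂)) := B₀(a₁,a₂) − c₁t₂ − c₂t₁ is invariant under the adjoint action of g̃_x, satisfies B(j(1),j(1)) = 0 where j(1) = (0,1), and B(j(1), (r(a)+tx, c)) = −t. -/

import Mathlib

attribute [local instance 100] LieRing.ofAssociativeRing

/-- In the construction of the central extension `g̃_x = g ⊕ ℂ`
by the cocycle `ω(y₁,y₂) = -B₀(r⁻¹[x, pr₀ y₁], pr₀ y₂)`, the symmetric bilinear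
form `B((y₁,c₁),(y₂,c₂)) := B₀(a₁,a₂) - c₁t₂ - c₂t₁` (where `yᵢ = r aᵢ + tᵢ x`,
`tᵢ = q yᵢ`) is invariant under the adjoint action of `g̃_x`, satisfies
`B(j(1),j(1)) = 0` for `j(1) = (0,1)`, and `B(j(1),(r a + t x, c)) = -t`. -/
theorem extension_bilinear_form_invariant
    {g₀ g : Type*} [LieRing g₀] [LieAlgebra ℂ g₀] [LieRing g] [LieAlgebra ℂ g]
    (r : g₀ →ₗ⁅ℂ⁆ g) (hr : Function.Injective r)
    (q : g →ₗ⁅ℂ⁆ ℂ) (hq : Function.Surjective q)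
    (hexact : ∀ y : g, q y = 0 ↔ ∃ a : g₀, r a = y)
    (B₀ : g₀ →ₗ[ℂ] g₀ →ₗ[ℂ] ℂ)
    (hsymm : ∀ a b : g₀, B₀ a b = B₀ b a)
    (hinv : ∀ (y : g) (a b a' b' : g₀), r a' = ⁅y, r a⁆ → r b' = ⁅y, r b⁆ →
      B₀ a' b + B₀ a b' = 0)
    (x : g) (hx : q x = 1)
    (ω : g → g → ℂ)
    (hω : ∀ (y₁ y₂ : g) (a₁ a₂ : g₀), r a₁ = ⁅x, y₁⁆ → r a₂ = y₂ - q y₂ • x →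
      ω y₁ y₂ = -B₀ a₁ a₂)
    (B : g × ℂ → g × ℂ → ℂ)
    (hB : ∀ (y₁ y₂ : g) (c₁ c₂ : ℂ) (a₁ a₂ : g₀),
      r a₁ = y₁ - q y₁ • x → r a₂ = y₂ - q y₂ • x →
      B (y₁, c₁) (y₂, c₂) = B₀ a₁ a₂ - c₁ * q y₂ - c₂ * q y₁) :
    (∀ z₁ z₂ z₃ : g × ℂ,
      B (⁅z₁.1, z₂.1⁆, ω z₁.1 z₂.1) z₃ + B z₂ (⁅z₁.1, z₃.1⁆, ω z₁.1 z₃.1) = 0) ∧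
    B ((0 : g), (1 : ℂ)) ((0 : g), (1 : ℂ)) = 0 ∧
    (∀ (y : g) (c : ℂ), B ((0 : g), (1 : ℂ)) (y, c) = -q y) := by
  have proj : ∀ y : g, ∃ a : g₀, r a = y - q y • x := fun y =>
    (hexact _).mp (by simp [map_sub, map_smul, hx])
  have lieC : ∀ y z : g, q ⁅y, z⁆ = 0 := by
    intro y z; rw [LieHom.map_lie]; exact (Commute.all _ _).lie_eq
  have projlie : ∀ y z : g, ∃ b : g₀, r b = ⁅y, z⁆ := fun y z =>
    (hexact _).mp (lieC y z)
  refine ⟨?_, ?_, ?_⟩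
  · rintro ⟨y₁, c₁⟩ ⟨y₂, c₂⟩ ⟨y₃, c₃⟩
    obtain ⟨a₂, ha₂⟩ := proj y₂
    obtain ⟨a₃, ha₃⟩ := proj y₃
    obtain ⟨b₁₂, hb₁₂⟩ := projlie y₁ y₂
    obtain ⟨b₁₃, hb₁₃⟩ := projlie y₁ y₃
    obtain ⟨aX, haX⟩ := projlie x y₁
    have hω₂ : ω y₁ y₂ = -B₀ aX a₂ := hω y₁ y₂ aX a₂ haX ha₂
    have hω₃ : ω y₁ y₃ = -B₀ aX a₃ := hω y₁ y₃ aX a₃ haX ha₃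
    have e1 : B (⁅y₁, y₂⁆, ω y₁ y₂) (y₃, c₃)
        = B₀ b₁₂ a₃ - ω y₁ y₂ * q y₃ - c₃ * q ⁅y₁, y₂⁆ :=
      hB _ _ _ _ _ _ (by rw [lieC]; simpa using hb₁₂) ha₃
    have e2 : B (y₂, c₂) (⁅y₁, y₃⁆, ω y₁ y₃)
        = B₀ a₂ b₁₃ - c₂ * q ⁅y₁, y₃⁆ - ω y₁ y₃ * q y₂ :=
      hB _ _ _ _ _ _ ha₂ (by rw [lieC]; simpa using hb₁₃)
    have hr₂ : r (b₁₂ + q y₂ • aX) = ⁅y₁, r a₂⁆ := by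
      rw [map_add r, map_smul, hb₁₂, haX, ha₂, lie_sub, lie_smul,
        ← lie_skew x y₁]
      module
    have hr₃ : r (b₁₃ + q y₃ • aX) = ⁅y₁, r a₃⁆ := by
      rw [map_add r, map_smul, hb₁₃, haX, ha₃, lie_sub, lie_smul,
        ← lie_skew x y₁]
      module
    have hinv' := hinv y₁ a₂ a₃ (b₁₂ + q y₂ • aX) (b₁₃ + q y₃ • aX) hr₂ hr₃
    simp only [map_add, map_smul, LinearMap.add_apply, LinearMap.smul_apply,
      smul_eq_mul] at hinv'
    rw [e1, e2, hω₂, hω₃, lieC, lieC]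
    linear_combination hinv' + q y₃ * hsymm aX a₂
  · rw [hB 0 0 1 1 0 0 (by simp) (by simp)]
    simp
  · intro y c
    obtain ⟨a, ha⟩ := proj y
    rw [hB 0 y 1 c 0 a (by simp) ha]
    simp
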